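/- Fix 1 ≤ k ≤ n−1 and let shadow_k(π) ∈ {S,L}^n replace each value ≤ k of π by S and each value > k by L. For any permutation σ and any word λ ∈ X(k, n−k) with λ ≠ S^k L^{n−k}, let λ' be obtained from λ by replacing each occurrence of the factor LS by SL. If shadow_k(σ) ≼ λ, then shadow_k(T(σ)) ≼ λ'. -/

import Mathlib

/-- Split a list into maximal strictly decreasing contiguous blocks ("falls"). -/
def fallSplit : List ℕ → List (List ℕ)
  | [] => []
  | a :: rest =>
    match fallSplit rest with
    | (b :: bs) :: gs => if b < a then (a :: b :: bs) :: gs else [a] :: (b :: bs) :: gs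
    | gs => [a] :: gs

/-- Split a list into maximal strictly increasing contiguous blocks ("runs"). -/
def runSplit : List ℕ → List (List ℕ)
  | [] => []
  | a :: rest =>
    match runSplit rest with
    | (b :: bs) :: gs => if a < b then (a :: b :: bs) :: gs else [a] :: (b :: bs) :: gs
    | gs => [a] :: gs

/-- The flip transformation `T`: reverse every fall. -/
def flipT (l : List ℕ) : List ℕ := ((fallSplit l).map List.reverse).flatten

/-- `l` is the one-line notation of a permutation of `{1, …, n}`. -/
def IsPermList (n : ℕ) (l : List ℕ) : Prop := l.Perm (List.range' 1 n)

/-- Every pair of adjacent runs overlaps: `min R₁ < max R₂` (pop-stacked condition). -/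
def Overlapping (l : List ℕ) : Prop :=
  ∀ R₁ R₂ : List ℕ, [R₁, R₂] <:+: runSplit l → ∃ a ∈ R₁, ∃ b ∈ R₂, a < b

/-- The k-shadow of a permutation: replace each value ≤ k by S (= true) and each value
> k by L (= false). -/
def shadow (k : ℕ) (l : List ℕ) : List Bool := l.map fun v => decide (v ≤ k)

/-- Replace every factor LS by SL (one step of T on shadows). -/
def stepLS : List Bool → List Bool
  | false :: true :: rest => true :: false :: stepLS rest
  | a :: rest => a :: stepLS rest
  | [] => []

/-- The partial order λ ≼ μ on {S,L}-words: each j-th S (from the left) of λ lies weakly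
to the left of the j-th S of μ; equivalently every prefix of λ contains at least as many
S letters as the corresponding prefix of μ. -/
def SPrec (lam mu : List Bool) : Prop :=
  ∀ p : ℕ, (mu.take p).count true ≤ (lam.take p).count true

/- ### auxiliary machinery -/

def cnt (w : List Bool) (p : ℕ) : ℕ := (w.take p).count true

def ind (w : List Bool) (p : ℕ) : ℕ :=
  if w[p-1]? = some false ∧ w[p]? = some true then 1 else 0

lemma cnt_zero (w : List Bool) : cnt w 0 = 0 := rfl

lemma cnt_succ (w : List Bool) (p : ℕ) :
    cnt w (p+1) = cnt w p + (if w[p]? = some true then 1 else 0) := by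
  unfold cnt
  rw [List.take_succ, List.count_append]
  rcases h : w[p]? with _ | b
  · simp
  · cases b <;> simp

lemma cnt_cons (a : Bool) (w : List Bool) (q : ℕ) :
    cnt (a :: w) (q+1) = (cond a 1 0) + cnt w q := by
  cases a <;> simp [cnt, List.count_cons, Nat.add_comm]

lemma cnt_append (X Y : List Bool) (p : ℕ) :
    cnt (X ++ Y) p = cnt X p + cnt Y (p - X.length) := by
  simp [cnt, List.take_append, List.count_append]

lemma ind_zero (w : List Bool) : ind w 0 = 0 := by
  unfold ind
  rw [if_neg]
  rintro ⟨h1, h2⟩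
  simp only [Nat.zero_sub] at h1
  rw [h1] at h2
  cases h2

lemma ind_cons (a : Bool) (w : List Bool) (q : ℕ) (hq : 1 ≤ q) :
    ind (a :: w) (q + 1) = ind w q := by
  obtain ⟨q', rfl⟩ : ∃ q', q = q' + 1 := ⟨q - 1, by omega⟩
  simp [ind, List.getElem?_cons_succ, Nat.add_sub_cancel]

lemma stepLS_cons₂ (a : Bool) (rest : List Bool)
    (h : ∀ r, a = false → rest = true :: r → False) :
    stepLS (a :: rest) = a :: stepLS rest := by
  match a, rest with
  | true, rest => rfl
  | false, [] => rfl
  | false, false :: r => rfl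
  | false, true :: r => exact (h r rfl rfl).elim

lemma stepLS_cnt (w : List Bool) : ∀ p, cnt (stepLS w) p = cnt w p + ind w p := by
  induction w using stepLS.induct with
  | case1 rest IH =>
    intro p
    have hstep : stepLS (false :: true :: rest) = true :: false :: stepLS rest := rfl
    rw [hstep]
    match p with
    | 0 => simp [cnt_zero, ind_zero]
    | 1 => simp [cnt, ind]
    | 2 => simp [cnt, ind]
    | (q+3) =>
      have h := IH (q+1)
      have e1 : cnt (true :: false :: stepLS rest) (q+3) = 1 + cnt (stepLS rest) (q+1) := by
        rw [cnt_cons, cnt_cons]; simp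
      have e2 : cnt (false :: true :: rest) (q+3) = 1 + cnt rest (q+1) := by
        rw [cnt_cons, cnt_cons]; simp
      have e3 : ind (false :: true :: rest) (q+3) = ind rest (q+1) := by
        rw [ind_cons _ _ (q+2) (by omega), ind_cons _ _ (q+1) (by omega)]
      omega
  | case2 a rest hno IH =>
    intro p
    rw [stepLS_cons₂ a rest hno]
    match p with
    | 0 => simp [cnt_zero, ind_zero]
    | (q+1) =>
      have h := IH q
      have e1 : cnt (a :: stepLS rest) (q+1) = (cond a 1 0) + cnt (stepLS rest) q := cnt_cons ..
      have e2 : cnt (a :: rest) (q+1) = (cond a 1 0) + cnt rest q := cnt_cons ..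
      rcases Nat.eq_zero_or_pos q with rfl | hq
      · have e3 : ind (a :: rest) 1 = 0 := by
          unfold ind
          rw [if_neg]
          rintro ⟨h1, h2⟩
          simp only [show (1:ℕ)-1 = 0 from rfl, List.getElem?_cons_zero, Option.some_inj,
            List.getElem?_cons_succ] at h1 h2
          rcases rest with _ | ⟨b, r⟩
          · simp at h2
          · simp only [List.getElem?_cons_zero, Option.some_inj] at h2
            exact hno r h1 (by rw [h2])
        rw [ind_zero] at h
        simp only [Nat.zero_add] at *
        omega
      · have e3 : ind (a :: rest) (q+1) = ind rest q := ind_cons _ _ _ hq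
        omega
  | case3 => intro p; simp [stepLS, cnt_zero, ind_zero, cnt, ind]

lemma mono_core {mu la : List Bool} (h : ∀ p, cnt la p ≤ cnt mu p) (p : ℕ) :
    cnt la p + ind la p ≤ cnt mu p + ind mu p := by
  by_cases hla : la[p-1]? = some false ∧ la[p]? = some true
  · obtain ⟨h1, h2⟩ := hla
    have indla : ind la p = 1 := if_pos ⟨h1, h2⟩
    obtain ⟨q, rfl⟩ : ∃ q, p = q + 1 := by
      rcases p with _ | q
      · simp only [Nat.zero_sub] at h1; rw [h1] at h2; cases h2
      · exact ⟨q, rfl⟩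
    simp only [Nat.add_sub_cancel] at h1
    have hlaq : cnt la (q+1) = cnt la q := by
      rw [cnt_succ, if_neg (by rw [h1]; simp)]; omega
    have hla2 : cnt la (q+1+1) = cnt la (q+1) + 1 := by
      rw [cnt_succ, if_pos h2]
    rcases Nat.lt_or_ge (cnt la (q+1)) (cnt mu (q+1)) with hlt | hge
    · rw [indla]; have : 0 ≤ ind mu (q+1) := Nat.zero_le _; omega
    · have heq : cnt mu (q+1) = cnt la (q+1) := Nat.le_antisymm hge (h _)
      have h3 := cnt_succ mu (q+1)
      have h4 : cnt la (q+1+1) ≤ cnt mu (q+1+1) := h _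
      have hmuT : mu[q+1]? = some true := by
        by_contra hc
        rw [if_neg hc] at h3
        omega
      have h5 := cnt_succ mu q
      have h6 : cnt la q ≤ cnt mu q := h q
      have hnotT : ¬ mu[q]? = some true := by
        intro hc
        rw [if_pos hc] at h5
        omega
      have hlen : q < mu.length := by
        obtain ⟨hl, -⟩ := List.getElem?_eq_some_iff.mp hmuT
        omega
      have hmuF : mu[q]? = some false := by
        rw [List.getElem?_eq_getElem hlen]
        rw [List.getElem?_eq_getElem hlen] at hnotT
        rcases hb : mu[q] with _ | _
        · rfl
        · exact absurd (by rw [hb]) hnotT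
      have indmu : ind mu (q+1) = 1 := by
        unfold ind
        rw [if_pos ⟨by simpa using hmuF, hmuT⟩]
      omega
  · have indla : ind la p = 0 := if_neg hla
    have := h p
    have : 0 ≤ ind mu p := Nat.zero_le _
    omega

lemma chain_form {b : List Bool} (hb : b.IsChain (· ≤ ·)) :
    ∃ f t, b = List.replicate f false ++ List.replicate t true := by
  induction b with
  | nil => exact ⟨0, 0, rfl⟩
  | cons x b' IH =>
    rw [List.isChain_cons] at hb
    obtain ⟨hhd, hb'⟩ := hb
    obtain ⟨f, t, hft⟩ := IH hb'
    cases x with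
    | false => exact ⟨f+1, t, by rw [hft, List.replicate_succ]; rfl⟩
    | true =>
      rcases f with _ | f
      · exact ⟨0, t+1, by rw [hft]; simp [List.replicate_succ]⟩
      · exfalso
        have hh : b'.head? = some false := by
          rw [hft, List.replicate_succ]; rfl
        exact absurd (hhd false hh) (by decide)

lemma cnt_block (f t p : ℕ) :
    cnt (List.replicate f false ++ List.replicate t true) p = min (p - f) t := by
  simp [cnt, List.take_append, List.take_replicate, List.count_append,
    List.count_replicate, List.length_replicate, Nat.min_comm]

lemma cnt_block_rev (f t p : ℕ) :
    cnt (List.replicate t true ++ List.replicate f false) p = min p t := by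
  simp [cnt, List.take_append, List.take_replicate, List.count_append,
    List.count_replicate, List.length_replicate, Nat.min_comm]

lemma block_getElem (f t i : ℕ) :
    (List.replicate f false ++ List.replicate t true)[i]? =
      if i < f then some false else if i < f + t then some true else none := by
  rw [List.getElem?_append]
  simp only [List.length_replicate, List.getElem?_replicate]
  split_ifs <;> first | rfl | omega

lemma block_ineq {b : List Bool} (hb : b.IsChain (· ≤ ·)) (p : ℕ) :
    cnt b p + ind b p ≤ cnt b.reverse p := by
  obtain ⟨f, t, rfl⟩ := chain_form hb
  rw [List.reverse_append, List.reverse_replicate, List.reverse_replicate,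
    cnt_block, cnt_block_rev]
  by_cases hc : (List.replicate f false ++ List.replicate t true)[p-1]? = some false ∧
      (List.replicate f false ++ List.replicate t true)[p]? = some true
  · have indeq : ind _ p = 1 := if_pos hc
    obtain ⟨h1, h2⟩ := hc
    rw [block_getElem] at h1 h2
    have c1 : p - 1 < f := by
      by_contra hcc
      rw [if_neg hcc] at h1
      split_ifs at h1 <;> cases h1
    have c2 : ¬ p < f ∧ p < f + t := by
      constructor
      · intro hcc; rw [if_pos hcc] at h2; cases h2
      · by_contra hcc
        rw [if_neg (by omega), if_neg (by omega)] at h2; cases h2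
    rw [indeq]
    omega
  · rw [show ind _ p = 0 from if_neg hc]
    omega

lemma ind_append {b W : List Bool} (hb : b ≠ [])
    (hbd : ¬(b.getLast? = some false ∧ W.head? = some true)) (p : ℕ) :
    ind (b ++ W) p ≤ ind b p + ind W (p - b.length) := by
  have hlen : 1 ≤ b.length := List.length_pos_iff.mpr hb
  rcases Nat.lt_trichotomy p b.length with hp | hp | hp
  · have e1 : (b ++ W)[p]? = b[p]? := by
      rw [List.getElem?_append, if_pos hp]
    have e2 : (b ++ W)[p-1]? = b[p-1]? := by
      rw [List.getElem?_append, if_pos (by omega)]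
    have : ind (b ++ W) p = ind b p := by unfold ind; rw [e1, e2]
    omega
  · suffices h0 : ind (b ++ W) p = 0 by omega
    unfold ind
    rw [if_neg]
    rintro ⟨h1, h2⟩
    apply hbd
    constructor
    · rw [List.getLast?_eq_getElem?, ← h1, List.getElem?_append, if_pos (by omega), hp]
    · rw [List.head?_eq_getElem?, ← h2, List.getElem?_append, if_neg (by omega), hp,
        Nat.sub_self]
  · have e1 : (b ++ W)[p]? = W[p - b.length]? := by
      rw [List.getElem?_append, if_neg (by omega)]
    have e2 : (b ++ W)[p-1]? = W[(p - b.length)-1]? := by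
      rw [List.getElem?_append, if_neg (by omega)]
      congr 1
      omega
    have : ind (b ++ W) p = ind W (p - b.length) := by unfold ind; rw [e1, e2]
    omega

lemma flatten_ineq : ∀ (bs : List (List Bool)),
    (∀ b ∈ bs, b ≠ [] ∧ b.IsChain (· ≤ ·)) →
    bs.IsChain (fun b c => ∀ x ∈ b.getLast?, ∀ y ∈ c.head?, y ≤ x) →
    ∀ p, cnt bs.flatten p + ind bs.flatten p ≤ cnt (bs.map List.reverse).flatten p := by
  intro bs
  induction bs with
  | nil => intro _ _ p; simp [cnt, ind]
  | cons b rest IH =>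
    intro hblocks hchain p
    obtain ⟨hbne, hbchain⟩ := hblocks b (List.mem_cons_self)
    rw [List.isChain_cons] at hchain
    obtain ⟨hrel, hchain'⟩ := hchain
    have hrest := fun c hc => hblocks c (List.mem_cons_of_mem _ hc)
    have IH' := IH hrest hchain' (p - b.length)
    simp only [List.flatten_cons, List.map_cons]
    have hbd : ¬(b.getLast? = some false ∧ (rest.flatten).head? = some true) := by
      rintro ⟨hL, hH⟩
      rcases rest with _ | ⟨c, rest'⟩
      · simp at hH
      · obtain ⟨hcne, -⟩ := hrest c (List.mem_cons_self)
        have hhead : (c :: rest').flatten.head? = c.head? := by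
          rw [List.flatten_cons, List.head?_append]
          rcases c with _ | ⟨x, c'⟩
          · exact absurd rfl hcne
          · rfl
        have h' := hrel c rfl
        have := h' false hL true (by rw [← hhead]; exact hH)
        exact absurd this (by decide)
    have hIA := ind_append hbne hbd p
    have hBL := block_ineq hbchain p
    rw [cnt_append, cnt_append, List.length_reverse]
    omega

lemma fallSplit_spec (l : List ℕ) :
    (fallSplit l).flatten = l ∧
    (∀ b ∈ fallSplit l, b ≠ [] ∧ b.IsChain (fun x y => y < x)) ∧
    (fallSplit l).IsChain (fun b c => ∀ x ∈ b.getLast?, ∀ y ∈ c.head?, x ≤ y) := by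
  induction l with
  | nil => simp [fallSplit]
  | cons a rest IH =>
    obtain ⟨IH1, IH2, IH3⟩ := IH
    rcases hsplit : fallSplit rest with _ | ⟨b0, gs⟩
    · have hfs : fallSplit (a :: rest) = [[a]] := by
        simp [fallSplit, hsplit]
      rw [hsplit] at IH1
      simp only [List.flatten_nil] at IH1
      rw [hfs, ← IH1]
      refine ⟨by simp, ?_, ?_⟩
      · intro b hb
        simp at hb
        subst hb
        exact ⟨by simp, by simp⟩
      · simp
    · rcases b0 with _ | ⟨x, xs⟩
      · exact absurd rfl ((IH2 [] (by rw [hsplit]; exact List.mem_cons_self)).1)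
      · rw [hsplit] at IH1 IH2 IH3
        by_cases hx : x < a
        · have hfs : fallSplit (a :: rest) = (a :: x :: xs) :: gs := by
            simp [fallSplit, hsplit, hx]
          rw [hfs]
          refine ⟨?_, ?_, ?_⟩
          · simp only [List.flatten_cons] at IH1 ⊢
            rw [List.cons_append, IH1]
          · intro b hb
            rcases List.mem_cons.mp hb with rfl | hb'
            · obtain ⟨-, hch⟩ := IH2 (x :: xs) (List.mem_cons_self)
              refine ⟨by simp, ?_⟩
              rw [List.isChain_cons]
              exact ⟨fun y hy => by simp at hy; omega, hch⟩
            · exact IH2 b (List.mem_cons_of_mem _ hb')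
          · rw [List.isChain_cons] at IH3 ⊢
            obtain ⟨hr, hc⟩ := IH3
            refine ⟨?_, hc⟩
            intro c hc' x' hx' y hy
            rw [List.getLast?_cons_cons] at hx'
            exact hr c hc' x' hx' y hy
        · have hfs : fallSplit (a :: rest) = [a] :: (x :: xs) :: gs := by
            simp [fallSplit, hsplit, hx]
          rw [hfs]
          refine ⟨?_, ?_, ?_⟩
          · simp only [List.flatten_cons] at IH1 ⊢
            rw [IH1]
            rfl
          · intro b hb
            rcases List.mem_cons.mp hb with rfl | hb'
            · exact ⟨by simp, by simp⟩
            · exact IH2 b hb'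
          · rw [List.isChain_cons]
            refine ⟨?_, IH3⟩
            intro c hc x' hx' y hy
            simp only [List.head?_cons, Option.mem_def, Option.some_inj] at hc
            subst hc
            simp only [List.getLast?_singleton, Option.mem_def, Option.some_inj] at hx'
            simp only [List.head?_cons, Option.mem_def, Option.some_inj] at hy
            omega

lemma bool_decide_le {k x y : ℕ} (hxy : x ≤ y) :
    decide (y ≤ k) ≤ decide (x ≤ k) := by
  by_cases hy : y ≤ k
  · simp [hy, Nat.le_trans hxy hy]
  · simp [hy]

theorem shadow_flipT_mono' (k : ℕ) (σ : List ℕ) (lam : List Bool)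
    (h : SPrec (shadow k σ) lam) :
    SPrec (shadow k (flipT σ)) (stepLS lam) := by
  intro p
  obtain ⟨hfl, hblocks, hchain⟩ := fallSplit_spec σ
  set bs := (fallSplit σ).map (shadow k) with hbs
  have hσeq : shadow k σ = bs.flatten := by
    rw [hbs]
    conv_lhs => rw [← hfl]
    exact List.map_flatten
  have hflipeq : shadow k (flipT σ) = (bs.map List.reverse).flatten := by
    rw [flipT, hbs]
    rw [show shadow k (((fallSplit σ).map List.reverse).flatten)
        = (((fallSplit σ).map List.reverse).map (shadow k)).flatten from List.map_flatten]
    rw [List.map_map, List.map_map]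
    congr 1
    apply List.map_congr_left
    intro b _
    simp [shadow, Function.comp, List.map_reverse]
  have hbs1 : ∀ b ∈ bs, b ≠ [] ∧ b.IsChain (· ≤ ·) := by
    intro b hb
    rw [hbs, List.mem_map] at hb
    obtain ⟨b0, hb0, rfl⟩ := hb
    obtain ⟨hne', hch⟩ := hblocks b0 hb0
    refine ⟨by simp [shadow, hne'], ?_⟩
    rw [shadow, List.isChain_map]
    exact hch.imp fun x y hxy => bool_decide_le (Nat.le_of_lt hxy)
  have hbs2 : bs.IsChain (fun b c => ∀ x ∈ b.getLast?, ∀ y ∈ c.head?, y ≤ x) := by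
    rw [hbs]
    rw [List.isChain_map]
    refine hchain.imp ?_
    intro b c hbc x hx y hy
    rw [shadow, List.getLast?_map] at hx
    rw [shadow, List.head?_map] at hy
    obtain ⟨x0, hx0, rfl⟩ := Option.mem_map.mp hx
    obtain ⟨y0, hy0, rfl⟩ := Option.mem_map.mp hy
    exact bool_decide_le (hbc x0 hx0 y0 hy0)
  have A := stepLS_cnt lam p
  have B := mono_core (fun q => h q) p
  have C := flatten_ineq bs hbs1 hbs2 p
  show cnt (stepLS lam) p ≤ cnt (shadow k (flipT σ)) p
  rw [hflipeq]
  rw [hσeq] at B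
  omega


/-- If shadow_k(σ) ≼ λ with λ ≠ Sᵏ Lⁿ⁻ᵏ, then shadow_k(T(σ)) ≼ λ', where λ' replaces
every factor LS of λ by SL. -/
theorem shadow_flipT_mono (n k : ℕ) (hk1 : 1 ≤ k) (hk2 : k ≤ n - 1)
    (σ : List ℕ) (hσ : IsPermList n σ)
    (lam : List Bool) (hlen : lam.length = n) (hcount : lam.count true = k)
    (hne : lam ≠ List.replicate k true ++ List.replicate (n - k) false)
    (h : SPrec (shadow k σ) lam) :
    SPrec (shadow k (flipT σ)) (stepLS lam) :=
  shadow_flipT_mono' k σ lam h
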